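/- Let K be a field, n ≥ 3, and let σ ∈ GL_n(K) have irreducible characteristic polynomial. Then there do NOT exist ρ, τ ∈ GL_n(K) such that t_{12}(1) = (ρ⁻¹σρ)·(τ⁻¹σ⁻¹τ). Equivalently, if t_{12}(1) is a product of a GL_n(K)-conjugate of σ and a GL_n(K)-conjugate of σ⁻¹, then the characteristic polynomial of σ is reducible. -/

import Mathlib

open Matrix Polynomial

section Aux

variable {n : ℕ} {K : Type*} [Field K]

/-- Characteristic polynomial is invariant under conjugation. -/
private lemma charpoly_conj_aux (M P : Matrix (Fin n) (Fin n) K) (hP : IsUnit P.det) :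
    (P⁻¹ * M * P).charpoly = M.charpoly := by
  have hPP : P⁻¹ * P = 1 := nonsing_inv_mul P hP
  have hcm : charmatrix (P⁻¹ * M * P) =
      (Polynomial.C : K →+* K[X]).mapMatrix P⁻¹ * charmatrix M *
        (Polynomial.C : K →+* K[X]).mapMatrix P := by
    rw [charmatrix, charmatrix, Matrix.mul_sub, Matrix.sub_mul, _root_.map_mul, _root_.map_mul]
    congr 1
    have h1 : Matrix.scalar (Fin n) (X : K[X]) * (Polynomial.C : K →+* K[X]).mapMatrix P⁻¹
        = (Polynomial.C : K →+* K[X]).mapMatrix P⁻¹ * Matrix.scalar (Fin n) (X : K[X]) :=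
      (Matrix.scalar_commute (X : K[X]) (fun r => Commute.all _ _) _).eq
    rw [← h1, Matrix.mul_assoc, ← _root_.map_mul, hPP, _root_.map_one, Matrix.mul_one]
  have hd := congrArg Matrix.det hcm
  rw [Matrix.det_mul, Matrix.det_mul] at hd
  have hdet1 : ((Polynomial.C : K →+* K[X]).mapMatrix P⁻¹).det
      * ((Polynomial.C : K →+* K[X]).mapMatrix P).det = 1 := by
    rw [← Matrix.det_mul, ← _root_.map_mul, hPP, _root_.map_one, Matrix.det_one]
  rw [Matrix.charpoly, hd, Matrix.charpoly, mul_right_comm, hdet1, one_mul]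

/-- If the row vector `v` pairs to zero with all coefficients of the adjugate of the
characteristic matrix applied to `e_jj`, then it pairs to zero with `p(C) e_jj` for all `p`. -/
private lemma key_vanish (hn : 0 < n) (Cm : Matrix (Fin n) (Fin n) K)
    (v : Fin n → K) (jj : Fin n)
    (hadj : ∀ k : ℕ,
      v ⬝ᵥ (((matPolyEquiv (adjugate (charmatrix Cm))).coeff k) *ᵥ (Pi.single jj 1)) = 0) :
    ∀ p : K[X], v ⬝ᵥ ((aeval Cm p) *ᵥ (Pi.single jj 1)) = 0 := by
  set q := matPolyEquiv (adjugate (charmatrix Cm)) with hqdef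
  have hmul : q * (X - Polynomial.C Cm)
      = (Cm.charpoly).map (algebraMap K (Matrix (Fin n) (Fin n) K)) := by
    have h : Cm.charpoly • (1 : Matrix (Fin n) (Fin n) K[X])
        = adjugate (charmatrix Cm) * charmatrix Cm := (adjugate_mul _).symm
    apply_fun matPolyEquiv at h
    simp only [_root_.map_mul, matPolyEquiv_charmatrix, matPolyEquiv_smul_one] at h
    exact h.symm
  have hrec : ∀ k : ℕ, q.coeff k
      = q.coeff (k+1) * Cm + (Cm.charpoly.coeff (k+1)) • (1 : Matrix (Fin n) (Fin n) K) := by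
    intro k
    have h := congrArg (fun p => Polynomial.coeff p (k+1)) hmul
    simp only [mul_sub, Polynomial.coeff_sub, Polynomial.coeff_mul_X, Polynomial.coeff_mul_C,
      Polynomial.coeff_map] at h
    rw [sub_eq_iff_eq_add] at h
    rw [h, Algebra.algebraMap_eq_smul_one, add_comm]
  have hrec0 : q.coeff 0 * Cm
      = (-(Cm.charpoly.coeff 0)) • (1 : Matrix (Fin n) (Fin n) K) := by
    have h := congrArg (fun p => Polynomial.coeff p 0) hmul
    simp only [mul_sub, Polynomial.coeff_sub, Polynomial.mul_coeff_zero, Polynomial.coeff_X_zero,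
      Polynomial.coeff_C_zero, Polynomial.coeff_map, mul_zero, zero_sub,
      Polynomial.coeff_mul_C] at h
    rw [Algebra.algebraMap_eq_smul_one] at h
    rw [← neg_eq_iff_eq_neg.mpr h.symm, neg_smul]
  have hχdeg : Cm.charpoly.natDegree = n := by
    rw [Matrix.charpoly_natDegree_eq_dim, Fintype.card_fin]
  have hhigh : ∀ k, n ≤ k → q.coeff k = 0 := by
    have hstep : ∀ k, n ≤ k → q.coeff k = q.coeff (k+1) * Cm := by
      intro k hk
      have hz : Cm.charpoly.coeff (k+1) = 0 :=
        Polynomial.coeff_eq_zero_of_natDegree_lt (by rw [hχdeg]; omega)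
      rw [hrec k, hz, zero_smul, add_zero]
    have hiter : ∀ j k, n ≤ k → q.coeff k = q.coeff (k + j) * Cm ^ j := by
      intro j
      induction j with
      | zero => intro k hk; simp
      | succ j ih =>
        intro k hk
        rw [hstep k hk, ih (k+1) (by omega), pow_succ, ← Matrix.mul_assoc,
          show k+1+j = k+(j+1) from by omega]
    intro k hk
    have hz : q.coeff (k + (q.natDegree + 1)) = 0 :=
      Polynomial.coeff_eq_zero_of_natDegree_lt (by omega)
    rw [hiter (q.natDegree + 1) k hk, hz, Matrix.zero_mul]
  have htop : q.coeff (n-1) = 1 := by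
    have h := hrec (n-1)
    rw [show n - 1 + 1 = n from by omega] at h
    have hc : Cm.charpoly.coeff n = 1 := by
      have h2 := (Matrix.charpoly_monic Cm).coeff_natDegree
      rwa [hχdeg] at h2
    rw [h, hhigh n le_rfl, Matrix.zero_mul, zero_add, hc, one_smul]
  have main : ∀ m : ℕ, ∀ k : ℕ,
      v ⬝ᵥ ((q.coeff k * Cm ^ m) *ᵥ (Pi.single jj 1)) = 0 := by
    intro m
    induction m with
    | zero => intro k; simpa using hadj k
    | succ m ih =>
      have hCm : v ⬝ᵥ ((Cm ^ m) *ᵥ (Pi.single jj 1)) = 0 := by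
        have h := ih (n-1)
        rwa [htop, Matrix.one_mul] at h
      intro k
      cases k with
      | zero =>
        have h : q.coeff 0 * Cm ^ (m+1)
            = (-(Cm.charpoly.coeff 0)) • Cm ^ m := by
          rw [pow_succ', ← Matrix.mul_assoc, hrec0, Matrix.smul_mul, Matrix.one_mul]
        rw [h, smul_mulVec, dotProduct_smul, hCm, smul_zero]
      | succ k =>
        have hq1 : q.coeff (k+1) * Cm
            = q.coeff k - (Cm.charpoly.coeff (k+1)) • (1 : Matrix (Fin n) (Fin n) K) := by
          rw [hrec k]; abel
        have h : q.coeff (k+1) * Cm ^ (m+1)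
            = q.coeff k * Cm ^ m - (Cm.charpoly.coeff (k+1)) • Cm ^ m := by
          rw [pow_succ', ← Matrix.mul_assoc, hq1, Matrix.sub_mul, Matrix.smul_mul, Matrix.one_mul]
        rw [h, sub_mulVec, dotProduct_sub, ih k, smul_mulVec, dotProduct_smul, hCm,
          smul_zero, sub_zero]
  have hCmall : ∀ m : ℕ, v ⬝ᵥ ((Cm ^ m) *ᵥ (Pi.single jj 1)) = 0 := by
    intro m
    have h := main m (n-1)
    rwa [htop, Matrix.one_mul] at h
  intro p
  induction p using Polynomial.induction_on' with
  | add p r hp hr =>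
    rw [_root_.map_add, Matrix.add_mulVec, dotProduct_add, hp, hr, add_zero]
  | monomial m a =>
    rw [Polynomial.aeval_monomial, ← Algebra.smul_def, smul_mulVec, dotProduct_smul,
      hCmall m, smul_zero]

/-- Cyclicity: when the characteristic polynomial is irreducible, every standard basis
vector is cyclic. -/
private lemma key_surj (Cm : Matrix (Fin n) (Fin n) K) (hirr : Irreducible Cm.charpoly)
    (jj : Fin n) :
    Function.Surjective (fun p : K[X] => (aeval Cm p) *ᵥ (Pi.single jj 1 : Fin n → K)) := by
  classical
  let u : Fin n → K := Pi.single jj 1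
  let φ : K[X] →ₗ[K] (Fin n → K) :=
    { toFun := fun p => (aeval Cm p) *ᵥ u
      map_add' := fun p r => by simp [_root_.map_add, Matrix.add_mulVec]
      map_smul' := fun c p => by simp [_root_.map_smul, smul_mulVec] }
  let J : Ideal K[X] :=
    { carrier := {p | (aeval Cm p) *ᵥ u = 0}
      add_mem' := by
        intro a b ha hb
        simp only [Set.mem_setOf_eq] at ha hb ⊢
        rw [_root_.map_add, Matrix.add_mulVec, ha, hb, add_zero]
      zero_mem' := by simp
      smul_mem' := by
        intro c p hp
        simp only [Set.mem_setOf_eq] at hp ⊢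
        rw [smul_eq_mul, _root_.map_mul, ← mulVec_mulVec, hp, Matrix.mulVec_zero] }
  have hχJ : Cm.charpoly ∈ J := by
    show (aeval Cm Cm.charpoly) *ᵥ u = 0
    rw [Matrix.aeval_self_charpoly, Matrix.zero_mulVec]
  obtain ⟨f, hf⟩ := (IsPrincipalIdealRing.principal J).principal
  have hfd : f ∣ Cm.charpoly := by
    rw [← Ideal.mem_span_singleton, Ideal.submodule_span_eq.symm, ← hf]
    exact hχJ
  obtain ⟨g, hg⟩ := hfd
  have hJχ : J = Ideal.span {Cm.charpoly} := by
    rcases hirr.isUnit_or_isUnit hg with hu | hu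
    · exfalso
      have h1 : (1 : K[X]) ∈ J := by
        rw [hf, Ideal.submodule_span_eq, Ideal.span_singleton_eq_top.mpr hu]
        trivial
      have h2 : (aeval Cm (1 : K[X])) *ᵥ u = 0 := h1
      rw [_root_.map_one, Matrix.one_mulVec] at h2
      have h3 := congrFun h2 jj
      simp [u] at h3
    · have hassoc : Associated f Cm.charpoly := by
        rw [hg]
        exact (associated_mul_unit_left f g hu).symm
      rw [hf, Ideal.submodule_span_eq, Ideal.span_singleton_eq_span_singleton.mpr hassoc]
  haveI : FiniteDimensional K (Polynomial.degreeLT K n) :=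
    LinearEquiv.finiteDimensional (Polynomial.degreeLTEquiv K n).symm
  have hn : 0 < n := jj.pos
  let ψ := φ.domRestrict (Polynomial.degreeLT K n)
  have hker : LinearMap.ker ψ = ⊥ := by
    rw [LinearMap.ker_eq_bot']
    rintro ⟨p, hp⟩ h0
    have hpJ : p ∈ J := h0
    rw [hJχ, Ideal.mem_span_singleton] at hpJ
    have hdegχ : Cm.charpoly.degree = (n : ℕ) := by
      rw [Matrix.charpoly_degree_eq_dim, Fintype.card_fin]
    have hdeg : p.degree < Cm.charpoly.degree := by
      rw [hdegχ]
      exact Polynomial.mem_degreeLT.mp hp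
    have := Polynomial.eq_zero_of_dvd_of_degree_lt hpJ hdeg
    exact Subtype.ext this
  have hfr : Module.finrank K (LinearMap.range ψ) = n := by
    have h1 := LinearMap.finrank_range_add_finrank_ker ψ
    rw [hker, finrank_bot, add_zero] at h1
    rw [h1, (Polynomial.degreeLTEquiv K n).finrank_eq, Module.finrank_fin_fun]
  have hrange : LinearMap.range ψ = ⊤ := by
    apply Submodule.eq_top_of_finrank_eq
    rw [hfr, Module.finrank_fin_fun]
  intro w
  have hw : w ∈ LinearMap.range ψ := by rw [hrange]; trivial
  obtain ⟨⟨p, hp⟩, hpw⟩ := hw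
  exact ⟨p, hpw⟩

end Aux

theorem stmt4 {n : ℕ} (hn : 3 ≤ n) {K : Type*} [Field K]
    (σ : Matrix (Fin n) (Fin n) K) (hσ : IsUnit σ.det)
    (hirr : Irreducible σ.charpoly) :
    ¬ ∃ ρ τ : Matrix (Fin n) (Fin n) K, IsUnit ρ.det ∧ IsUnit τ.det ∧
      Matrix.transvection (⟨0, by omega⟩ : Fin n) (⟨1, by omega⟩ : Fin n) (1 : K)
        = (ρ⁻¹ * σ * ρ) * (τ⁻¹ * σ⁻¹ * τ) := by
  rintro ⟨ρ, τ, hρ, hτ, h⟩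
  set i0 : Fin n := ⟨0, by omega⟩ with hi0
  set i1 : Fin n := ⟨1, by omega⟩ with hi1
  set Cm : Matrix (Fin n) (Fin n) K := τ⁻¹ * σ * τ with hCdef
  have hτ' : IsUnit (τ⁻¹).det := isUnit_nonsing_inv_det τ hτ
  have hdetC : IsUnit Cm.det := by
    rw [hCdef, Matrix.det_mul, Matrix.det_mul]
    exact (hτ'.mul hσ).mul hτ
  have hinv : (τ⁻¹ * σ⁻¹ * τ) * Cm = 1 := by
    have h1 : τ * τ⁻¹ = 1 := mul_nonsing_inv τ hτ
    have h2 : σ⁻¹ * σ = 1 := nonsing_inv_mul σ hσ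
    have h3 : τ⁻¹ * τ = 1 := nonsing_inv_mul τ hτ
    show τ⁻¹ * σ⁻¹ * τ * (τ⁻¹ * σ * τ) = 1
    simp only [Matrix.mul_assoc]
    rw [← Matrix.mul_assoc τ τ⁻¹ (σ * τ), h1, Matrix.one_mul,
      ← Matrix.mul_assoc σ⁻¹ σ τ, h2, Matrix.one_mul, h3]
  have htC : Matrix.transvection i0 i1 (1:K) * Cm = ρ⁻¹ * σ * ρ := by
    rw [h, Matrix.mul_assoc, hinv, Matrix.mul_one]
  have hcheq : (Matrix.transvection i0 i1 (1:K) * Cm).charpoly = Cm.charpoly := by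
    rw [htC, charpoly_conj_aux σ ρ hρ, charpoly_conj_aux σ τ hτ]
  -- rewrite t * Cm as a row update
  have hrow : Matrix.transvection i0 i1 (1:K) * Cm
      = updateRow Cm i0 (fun b => Cm i0 b + Cm i1 b) := by
    ext a b
    by_cases ha : a = i0
    · subst ha
      rw [Matrix.updateRow_self]
      rw [Matrix.transvection_mul_apply_same, one_mul]
    · rw [Matrix.updateRow_ne ha, Matrix.transvection_mul_apply_of_ne _ _ a b ha]
  have hcm : charmatrix (updateRow Cm i0 (fun b => Cm i0 b + Cm i1 b))
      = updateRow (charmatrix Cm) i0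
          (charmatrix Cm i0 + (-(fun b' => Polynomial.C (Cm i1 b')))) := by
    refine Matrix.ext fun a b => ?_
    by_cases ha : a = i0
    · subst ha
      rw [Matrix.updateRow_self]
      rw [show charmatrix (updateRow Cm i0 (fun b => Cm i0 b + Cm i1 b)) i0 b
          = (Matrix.diagonal fun _ : Fin n => (X : K[X])) i0 b
            - Polynomial.C ((updateRow Cm i0 fun b => Cm i0 b + Cm i1 b) i0 b) from charmatrix_apply _ _ _]
      rw [Matrix.updateRow_self, Pi.add_apply, Pi.neg_apply, charmatrix_apply, map_add]
      ring
    · rw [Matrix.updateRow_ne ha,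
        show charmatrix (updateRow Cm i0 (fun b => Cm i0 b + Cm i1 b)) a b
          = (Matrix.diagonal fun _ : Fin n => (X : K[X])) a b
            - Polynomial.C ((updateRow Cm i0 fun b => Cm i0 b + Cm i1 b) a b) from charmatrix_apply _ _ _,
        Matrix.updateRow_ne ha, charmatrix_apply]
  have hdet0 : det (updateRow (charmatrix Cm) i0 (fun b => Polynomial.C (Cm i1 b))) = 0 := by
    have h1 : (Matrix.transvection i0 i1 (1:K) * Cm).charpoly
        = Cm.charpoly - det (updateRow (charmatrix Cm) i0 (fun b => Polynomial.C (Cm i1 b))) := by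
      show det (charmatrix _) = _
      rw [hrow, hcm, det_updateRow_add, Matrix.updateRow_eq_self]
      rw [show (-(fun b' => Polynomial.C (Cm i1 b'))) = ((-1 : K[X]) • fun b' => Polynomial.C (Cm i1 b')) from by
        funext b'; simp]
      rw [det_updateRow_smul]
      rw [Matrix.charpoly]
      ring
    rw [hcheq] at h1
    have := sub_eq_self.mp h1.symm
    exact this
  -- pairing with the adjugate vanishes
  have hsum : ∑ b : Fin n, adjugate (charmatrix Cm) b i0 * Polynomial.C (Cm i1 b) = 0 := by
    have h1 : det (updateRow (charmatrix Cm) i0 (fun b => Polynomial.C (Cm i1 b)))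
        = (adjugate (charmatrix Cm)ᵀ *ᵥ (fun b => Polynomial.C (Cm i1 b))) i0 := by
      rw [← cramer_eq_adjugate_mulVec, Matrix.cramer_apply, Matrix.updateCol_transpose,
        Matrix.det_transpose]
    rw [h1] at hdet0
    rw [← hdet0]
    simp only [Matrix.mulVec, dotProduct, ← Matrix.adjugate_transpose,
      Matrix.transpose_apply]
  have hadj : ∀ k : ℕ,
      (fun b => Cm i1 b) ⬝ᵥ
        (((matPolyEquiv (adjugate (charmatrix Cm))).coeff k) *ᵥ (Pi.single i0 1)) = 0 := by
    intro k
    have h1 := congrArg (fun p => Polynomial.coeff p k) hsum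
    simp only [Polynomial.finset_sum_coeff, Polynomial.coeff_mul_C, Polynomial.coeff_zero] at h1
    rw [dotProduct]
    rw [← h1]
    apply Finset.sum_congr rfl
    intro b _
    simp only [Matrix.mulVec_single, mul_one, MulOpposite.op_one, one_smul, Matrix.col_apply,
      matPolyEquiv_coeff_apply]
    exact mul_comm _ _
  have hvan := key_vanish (by omega : 0 < n) Cm (fun b => Cm i1 b) i0 hadj
  have hsurj := key_surj Cm (by rw [charpoly_conj_aux σ τ hτ]; exact hirr) i0
  have hrowzero : ∀ b : Fin n, Cm i1 b = 0 := by
    intro b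
    obtain ⟨p, hp⟩ := hsurj (Pi.single b 1)
    have hp' : (aeval Cm p) *ᵥ (Pi.single i0 1 : Fin n → K) = Pi.single b 1 := hp
    have hv := hvan p
    rw [hp', dotProduct_single, mul_one] at hv
    exact hv
  have hdet : Cm.det = 0 := det_eq_zero_of_row_eq_zero i1 hrowzero
  rw [hdet] at hdetC
  exact hdetC.ne_zero rfl
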